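/- arXiv:0708.1539 — 3 statements merged into one kernel-verified Lean document; each statement's English description precedes it below -/
import Mathlib

section
/- For unit vectors φ, ψ in a complex Hilbert space H, the operator norm of the difference of the rank-one projections satisfies ‖P_φ − P_ψ‖ = √(1 − |⟨φ,ψ⟩|²). -/
open MeasureTheory Topology Filter

/-- The rank-one operator `|φ⟩⟨φ|`. -/
noncomputable def rankOne {H : Type*} [NormedAddCommGroup H] [InnerProductSpace ℂ H]
    (φ : H) : H →L[ℂ] H := (innerSL ℂ φ).smulRight φ

/-- The set of rank-one orthogonal projections (pure states / projective Hilbert space). -/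
noncomputable def projSet (H : Type*) [NormedAddCommGroup H] [InnerProductSpace ℂ H] :
    Set (H →L[ℂ] H) := {T | ∃ φ : H, ‖φ‖ = 1 ∧ T = rankOne φ}

/-- The trace of an operator computed along a Hilbert basis. -/
noncomputable def traceAlong {H ι : Type*} [NormedAddCommGroup H] [InnerProductSpace ℂ H]
    (b : HilbertBasis ι ℂ H) (A : H →L[ℂ] H) : ℂ :=
  ∑' i, inner ℂ (b i) (A (b i))

section Aux

variable {H : Type*} [NormedAddCommGroup H] [InnerProductSpace ℂ H] [CompleteSpace H]

lemma rankOne_apply' (φ x : H) : rankOne φ x = (inner ℂ φ x : ℂ) • φ := rfl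

lemma rankOne_isSelfAdjoint (φ : H) : IsSelfAdjoint (rankOne φ) := by
  rw [ContinuousLinearMap.isSelfAdjoint_iff_isSymmetric]
  intro x y
  simp [rankOne_apply', inner_smul_left, inner_smul_right, mul_comm]

lemma rankOne_cube (φ ψ : H) (hφ : ‖φ‖ = 1) (hψ : ‖ψ‖ = 1) :
    (rankOne φ - rankOne ψ) * (rankOne φ - rankOne ψ) * (rankOne φ - rankOne ψ)
      = ((1 - ‖(inner ℂ φ ψ : ℂ)‖ ^ 2 : ℝ) : ℂ) • (rankOne φ - rankOne ψ) := by
  have h1 : (inner ℂ φ φ : ℂ) = 1 := by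
    rw [inner_self_eq_norm_sq_to_K]; simp [hφ]
  have h2 : (inner ℂ ψ ψ : ℂ) = 1 := by
    rw [inner_self_eq_norm_sq_to_K]; simp [hψ]
  have h3 : (inner ℂ ψ φ : ℂ) = starRingEnd ℂ (inner ℂ φ ψ) := by rw [inner_conj_symm]
  ext x
  simp only [ContinuousLinearMap.mul_apply, ContinuousLinearMap.sub_apply,
    ContinuousLinearMap.smul_apply, rankOne_apply', inner_sub_right, inner_smul_right,
    smul_sub, smul_smul, h1, h2, h3]
  rw [sub_smul, sub_smul]
  have h4 : ((‖(inner ℂ φ ψ : ℂ)‖ : ℂ)) ^ 2 = starRingEnd ℂ (inner ℂ φ ψ) * inner ℂ φ ψ := by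
    rw [← Complex.normSq_eq_conj_mul_self, Complex.normSq_eq_norm_sq]
    push_cast; ring
  push_cast [h4]
  match_scalars <;> ring

end Aux

theorem stmt0 {H : Type*} [NormedAddCommGroup H] [InnerProductSpace ℂ H] [CompleteSpace H]
    (φ ψ : H) (hφ : ‖φ‖ = 1) (hψ : ‖ψ‖ = 1) :
    ‖rankOne φ - rankOne ψ‖ = Real.sqrt (1 - ‖(inner ℂ φ ψ : ℂ)‖ ^ 2) := by
  set T : H →L[ℂ] H := rankOne φ - rankOne ψ with hTdef
  have hc1 : ‖(inner ℂ φ ψ : ℂ)‖ ≤ 1 := by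
    have := norm_inner_le_norm (𝕜 := ℂ) φ ψ
    rwa [hφ, hψ, one_mul] at this
  have hs2nn : (0:ℝ) ≤ 1 - ‖(inner ℂ φ ψ : ℂ)‖ ^ 2 := by
    have : ‖(inner ℂ φ ψ : ℂ)‖ ^ 2 ≤ 1 := by
      calc ‖(inner ℂ φ ψ : ℂ)‖ ^ 2 ≤ 1 ^ 2 := pow_le_pow_left₀ (norm_nonneg _) hc1 2
        _ = 1 := one_pow 2
    linarith
  have hTsa : IsSelfAdjoint T := (rankOne_isSelfAdjoint φ).sub (rankOne_isSelfAdjoint ψ)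
  have key : T * T * T = ((1 - ‖(inner ℂ φ ψ : ℂ)‖ ^ 2 : ℝ) : ℂ) • T := rankOne_cube φ ψ hφ hψ
  have normsq : ∀ A : H →L[ℂ] H, IsSelfAdjoint A → ‖A * A‖ = ‖A‖ * ‖A‖ := by
    intro A hA
    conv_lhs => rw [show A * A = star A * A by rw [hA.star_eq]]
    exact CStarRing.norm_star_mul_self
  by_cases hT : T = 0
  · have heq : rankOne φ = rankOne ψ := sub_eq_zero.mp hT
    have happ : φ = (inner ℂ ψ φ : ℂ) • ψ := by
      have := congrArg (fun A : H →L[ℂ] H => A φ) heq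
      simpa [rankOne_apply', inner_self_eq_norm_sq_to_K, hφ] using this
    have hnorm : ‖(inner ℂ ψ φ : ℂ)‖ = 1 := by
      have := congrArg (fun x : H => ‖x‖) happ
      simp only [norm_smul, hψ, mul_one, hφ] at this
      exact this.symm
    have hnorm' : ‖(inner ℂ φ ψ : ℂ)‖ = 1 := by
      rw [norm_inner_symm]; exact hnorm
    rw [hT, hnorm']
    simp
  · have hTn : (0 : ℝ) < ‖T‖ := norm_pos_iff.mpr hT
    have hsq : ‖T * T‖ = ‖T‖ * ‖T‖ := normsq T hTsa
    have hT2sa : IsSelfAdjoint (T * T) := by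
      rw [IsSelfAdjoint, star_mul, hTsa.star_eq]
    have hsq2 : ‖(T * T) * (T * T)‖ = (‖T‖ * ‖T‖) * (‖T‖ * ‖T‖) := by
      rw [normsq (T * T) hT2sa, hsq]
    have h4 : (T * T) * (T * T) = ((1 - ‖(inner ℂ φ ψ : ℂ)‖ ^ 2 : ℝ) : ℂ) • (T * T) := by
      calc (T * T) * (T * T) = (T * T * T) * T := (mul_assoc (T*T) T T).symm
        _ = (((1 - ‖(inner ℂ φ ψ : ℂ)‖ ^ 2 : ℝ) : ℂ) • T) * T := by rw [key]
        _ = ((1 - ‖(inner ℂ φ ψ : ℂ)‖ ^ 2 : ℝ) : ℂ) • (T * T) := by rw [smul_mul_assoc]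
    have hnorm4 : (‖T‖ * ‖T‖) * (‖T‖ * ‖T‖)
        = (1 - ‖(inner ℂ φ ψ : ℂ)‖ ^ 2) * (‖T‖ * ‖T‖) := by
      rw [← hsq2, h4, norm_smul, hsq]
      rw [Complex.norm_real, Real.norm_of_nonneg hs2nn]
    have hfinal : ‖T‖ * ‖T‖ = 1 - ‖(inner ℂ φ ψ : ℂ)‖ ^ 2 :=
      mul_right_cancel₀ (by positivity) hnorm4
    rw [← hfinal, Real.sqrt_mul_self (le_of_lt hTn)]
end

section
/- Let {P_n} be rank-one projections on a separable complex Hilbert space and W₀ a density operator with tr(W₀ P_n) → 1. Then there exists a rank-one projection P such that ‖P_n − P‖ → 0 and W₀ = P. -/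
open MeasureTheory Topology Filter
open scoped ComplexInnerProductSpace

/-- `W` is a density operator: positive, trace class, with trace one
(trace computed along the Hilbert basis `b`). -/
noncomputable def IsDensityOp {H ι : Type*} [NormedAddCommGroup H] [InnerProductSpace ℂ H]
    [CompleteSpace H] (b : HilbertBasis ι ℂ H) (W : H →L[ℂ] H) : Prop :=
  W.IsPositive ∧ HasSum (fun i => (inner ℂ (b i) (W (b i)) : ℂ)) 1

section Helpers

variable {H : Type*} [NormedAddCommGroup H] [InnerProductSpace ℂ H] [CompleteSpace H]

lemma parseval_hasSum {κ : Type*} (c : HilbertBasis κ ℂ H) (x : H) :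
    HasSum (fun j => ‖(⟪c j, x⟫ : ℂ)‖ ^ 2) (‖x‖ ^ 2) := by
  have h := (c.hasSum_inner_mul_inner x x).mapL Complex.reCLM
  have h2 : ∀ j, Complex.reCLM ((⟪x, c j⟫ : ℂ) * ⟪c j, x⟫) = ‖(⟪c j, x⟫ : ℂ)‖ ^ 2 := by
    intro j
    rw [← inner_conj_symm x (c j), RCLike.conj_mul, Complex.reCLM_apply]
    exact_mod_cast rfl
  have h3 : Complex.reCLM (⟪x, x⟫ : ℂ) = ‖x‖ ^ 2 := by
    simpa using inner_self_eq_norm_sq (𝕜 := ℂ) x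
  rw [← h3]
  exact h.congr_fun fun j => (h2 j).symm

lemma hasSum_sq_basis_change {ι κ : Type*} (b : HilbertBasis ι ℂ H) (c : HilbertBasis κ ℂ H)
    (T : H →L[ℂ] H) (hT : (T : H →ₗ[ℂ] H).IsSymmetric) {t : ℝ}
    (h : HasSum (fun i => ‖T (b i)‖ ^ 2) t) :
    HasSum (fun j => ‖T (c j)‖ ^ 2) t := by
  set F : ι × κ → ℝ := fun p => ‖(⟪c p.2, T (b p.1)⟫ : ℂ)‖ ^ 2 with hFdef
  have hFnn : 0 ≤ F := fun p => sq_nonneg _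
  have hrow : ∀ i, HasSum (fun j => F (i, j)) (‖T (b i)‖ ^ 2) := fun i =>
    parseval_hasSum c (T (b i))
  have hFs : Summable F := (summable_prod_of_nonneg hFnn).mpr
    ⟨fun i => (hrow i).summable, by
      apply Summable.congr h.summable
      intro i
      exact ((hrow i).tsum_eq).symm⟩
  have hswap : ∀ i j, F (i, j) = ‖(⟪b i, T (c j)⟫ : ℂ)‖ ^ 2 := by
    intro i j
    have h1 : (⟪c j, T (b i)⟫ : ℂ) = ⟪T (c j), b i⟫ := (hT (c j) (b i)).symm
    rw [hFdef]
    simp only [h1]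
    rw [← inner_conj_symm (b i) (T (c j)), RCLike.norm_conj]
  have hcol : ∀ j, HasSum (fun i => F (i, j)) (‖T (c j)‖ ^ 2) := by
    intro j
    have := parseval_hasSum b (T (c j))
    exact this.congr_fun fun i => hswap i j
  have hF' : Summable fun p : κ × ι => F p.swap := hFs.prod_symm
  have hFnn' : 0 ≤ fun p : κ × ι => F p.swap := fun p => sq_nonneg _
  have hgs : Summable fun j => ‖T (c j)‖ ^ 2 := by
    have := ((summable_prod_of_nonneg hFnn').mp hF').2
    apply this.congr
    intro j
    exact (hcol j).tsum_eq
  rw [hgs.hasSum_iff]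
  calc ∑' j, ‖T (c j)‖ ^ 2 = ∑' j, ∑' i, F (i, j) := by
        exact tsum_congr fun j => ((hcol j).tsum_eq).symm
    _ = ∑' (p : κ × ι), F p.swap := (Summable.tsum_prod' hF' fun j => (hF'.prod_factor j)).symm
    _ = ∑' (p : ι × κ), F p := by
        simpa using (Equiv.prodComm κ ι).tsum_eq F
    _ = ∑' i, ∑' j, F (i, j) := Summable.tsum_prod' hFs fun i => (hrow i).summable
    _ = ∑' i, ‖T (b i)‖ ^ 2 := tsum_congr fun i => (hrow i).tsum_eq
    _ = t := h.tsum_eq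

lemma norm_T_le {ι : Type*} (b : HilbertBasis ι ℂ H) (T : H →L[ℂ] H)
    (hT : (T : H →ₗ[ℂ] H).IsSymmetric)
    (h : HasSum (fun i => ‖T (b i)‖ ^ 2) 1) (x : H) : ‖T x‖ ≤ ‖x‖ := by
  rcases eq_or_ne x 0 with rfl | hx
  · simp
  · have hnx : (0:ℝ) < ‖x‖ := norm_pos_iff.mpr hx
    set y : H := (‖x‖ : ℂ)⁻¹ • x with hy
    have hy1 : ‖y‖ = 1 := by
      rw [hy, norm_smul]
      simp [norm_inv, hnx.ne']
    have hon : Orthonormal ℂ ((↑) : ({y} : Set H) → H) := by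
      classical
      rw [orthonormal_subtype_iff_ite]
      intro v hv w hw
      simp only [Set.mem_singleton_iff] at hv hw
      subst hv; subst hw
      simp [inner_self_eq_norm_sq_to_K, hy1]
    obtain ⟨w, c, hsw, hcw⟩ := hon.exists_hilbertBasis_extension
    have h1 := hasSum_sq_basis_change b c T hT h
    have hmem : y ∈ w := hsw rfl
    have h2 : ‖T (c ⟨y, hmem⟩)‖ ^ 2 ≤ 1 := le_hasSum h1 ⟨y, hmem⟩ fun j _ => sq_nonneg _
    have hcy : c ⟨y, hmem⟩ = y := by rw [hcw]
    rw [hcy] at h2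
    have hTy : ‖T y‖ ≤ 1 := by nlinarith [norm_nonneg (T y)]
    have : T y = (‖x‖ : ℂ)⁻¹ • T x := by rw [hy, _root_.map_smul]
    rw [this, norm_smul] at hTy
    simp only [norm_inv, Complex.norm_real, Real.norm_eq_abs, abs_of_pos hnx] at hTy
    calc ‖T x‖ = ‖x‖ * (‖x‖⁻¹ * ‖T x‖) := by field_simp
    _ ≤ ‖x‖ * 1 := by nlinarith
    _ = ‖x‖ := mul_one _

lemma pair_sq_le {ι : Type*} (b : HilbertBasis ι ℂ H) (T : H →L[ℂ] H)
    (hT : (T : H →ₗ[ℂ] H).IsSymmetric)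
    (h : HasSum (fun i => ‖T (b i)‖ ^ 2) 1) {φ u : H} (hφ : ‖φ‖ = 1) (hu : ‖u‖ = 1)
    (hou : (⟪φ, u⟫ : ℂ) = 0) : ‖T φ‖ ^ 2 + ‖T u‖ ^ 2 ≤ 1 := by
  classical
  have hne : φ ≠ u := by
    rintro rfl
    rw [inner_self_eq_norm_sq_to_K, hφ] at hou
    norm_num at hou
  have h0 : (⟪u, φ⟫ : ℂ) = 0 := by rw [← inner_conj_symm u φ, hou, map_zero]
  have hon : Orthonormal ℂ ((↑) : ({φ, u} : Set H) → H) := by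
    rw [orthonormal_subtype_iff_ite]
    intro v hv w hw
    simp only [Set.mem_insert_iff, Set.mem_singleton_iff] at hv hw
    rcases hv with rfl | rfl <;> rcases hw with rfl | rfl <;>
      simp [inner_self_eq_norm_sq_to_K, hφ, hu, hou, h0, hne, hne.symm]
  obtain ⟨w, c, hsw, hcw⟩ := hon.exists_hilbertBasis_extension
  have h1 := hasSum_sq_basis_change b c T hT h
  have hmφ : φ ∈ w := hsw (by simp)
  have hmu : u ∈ w := hsw (by simp)
  have hnew : (⟨φ, hmφ⟩ : w) ≠ ⟨u, hmu⟩ := by simpa using hne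
  have h2 := sum_le_hasSum ({⟨φ, hmφ⟩, ⟨u, hmu⟩} : Finset w) (fun i _ => sq_nonneg _) h1
  rw [Finset.sum_pair hnew] at h2
  have hcφ : c ⟨φ, hmφ⟩ = φ := by rw [hcw]
  have hcu : c ⟨u, hmu⟩ = u := by rw [hcw]
  rwa [hcφ, hcu] at h2

end Helpers

set_option maxHeartbeats 1000000 in
theorem stmt16 {H ι : Type*} [NormedAddCommGroup H] [InnerProductSpace ℂ H] [CompleteSpace H]
    [SecondCountableTopology H] (b : HilbertBasis ι ℂ H)
    (P : ℕ → H →L[ℂ] H) (hP : ∀ n, P n ∈ projSet H)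
    (W₀ : H →L[ℂ] H) (hW₀ : IsDensityOp b W₀)
    (hlim : Tendsto (fun n => traceAlong b (W₀ * P n)) atTop (nhds 1)) :
    ∃ Q ∈ projSet H, Tendsto (fun n => ‖P n - Q‖) atTop (nhds 0) ∧ W₀ = Q := by
  classical
  obtain ⟨hpos, htr⟩ := hW₀
  have hW0nn : (0 : H →L[ℂ] H) ≤ W₀ := (ContinuousLinearMap.nonneg_iff_isPositive W₀).mpr hpos
  obtain ⟨T, hTnn, hTT⟩ : ∃ T : H →L[ℂ] H, (0 : H →L[ℂ] H) ≤ T ∧ T * T = W₀ :=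
    ⟨CFC.sqrt W₀, CFC.sqrt_nonneg W₀, CFC.sqrt_mul_sqrt_self W₀ hW0nn⟩
  have hTpos : T.IsPositive := (ContinuousLinearMap.nonneg_iff_isPositive T).mp hTnn
  have hTsym : (T : H →ₗ[ℂ] H).IsSymmetric :=
    ContinuousLinearMap.isSelfAdjoint_iff_isSymmetric.mp hTpos.isSelfAdjoint
  have hWsym : (W₀ : H →ₗ[ℂ] H).IsSymmetric :=
    ContinuousLinearMap.isSelfAdjoint_iff_isSymmetric.mp hpos.isSelfAdjoint
  have hTx : ∀ x : H, ‖T x‖ ^ 2 = Complex.re ⟪x, W₀ x⟫ := by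
    intro x
    have h1 : (⟪T x, T x⟫ : ℂ) = ⟪x, (T * T) x⟫ := by
      rw [ContinuousLinearMap.mul_apply]; exact hTsym x (T x)
    rw [hTT] at h1
    rw [← h1]
    exact (inner_self_eq_norm_sq (𝕜 := ℂ) (T x)).symm
  have hsumT : HasSum (fun i => ‖T (b i)‖ ^ 2) 1 := by
    have h := htr.mapL Complex.reCLM
    simp only [Complex.reCLM_apply, Complex.one_re] at h
    exact h.congr_fun fun i => hTx (b i)
  have ht1 : ∀ x : H, ‖T x‖ ≤ ‖x‖ := norm_T_le b T hTsym hsumT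
  have hW1 : ∀ x : H, ‖W₀ x‖ ≤ ‖x‖ := fun x => by
    rw [← hTT, ContinuousLinearMap.mul_apply]; exact (ht1 (T x)).trans (ht1 x)
  have horto : ∀ φ u : H, ‖φ‖ = 1 → (⟪φ, u⟫ : ℂ) = 0 →
      ‖T u‖ ^ 2 ≤ (1 - ‖T φ‖ ^ 2) * ‖u‖ ^ 2 := by
    intro φ u hφ hou
    rcases eq_or_ne u 0 with rfl | hune
    · simp
    · have hnu : (0:ℝ) < ‖u‖ := norm_pos_iff.mpr hune
      set v : H := (‖u‖ : ℂ)⁻¹ • u with hv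
      have hv1 : ‖v‖ = 1 := by
        rw [hv, norm_smul, norm_inv, Complex.norm_real, Real.norm_eq_abs, abs_of_pos hnu]
        exact inv_mul_cancel₀ hnu.ne'
      have hov : (⟪φ, v⟫ : ℂ) = 0 := by rw [hv, inner_smul_right, hou, mul_zero]
      have hps := pair_sq_le b T hTsym hsumT hφ hv1 hov
      have hTv : ‖T v‖ = ‖u‖⁻¹ * ‖T u‖ := by
        rw [hv, _root_.map_smul, norm_smul, norm_inv, Complex.norm_real, Real.norm_eq_abs,
          abs_of_pos hnu]
      rw [hTv, mul_pow] at hps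
      have h2 : ‖u‖⁻¹ ^ 2 * ‖T u‖ ^ 2 ≤ 1 - ‖T φ‖ ^ 2 := by linarith
      have h3 : (‖u‖⁻¹ ^ 2 * ‖T u‖ ^ 2) * ‖u‖ ^ 2 ≤ (1 - ‖T φ‖ ^ 2) * ‖u‖ ^ 2 :=
        mul_le_mul_of_nonneg_right h2 (by positivity)
      calc ‖T u‖ ^ 2 = (‖u‖⁻¹ ^ 2 * ‖T u‖ ^ 2) * ‖u‖ ^ 2 := by field_simp
      _ ≤ (1 - ‖T φ‖ ^ 2) * ‖u‖ ^ 2 := h3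
  have hkey : ∀ φ : H, ‖φ‖ = 1 → ‖W₀ - rankOne φ‖ ≤ 3 * Real.sqrt (1 - ‖T φ‖ ^ 2) := by
    intro φ hφ
    have hε0 : 0 ≤ 1 - ‖T φ‖ ^ 2 := by
      have h := ht1 φ
      rw [hφ] at h
      nlinarith [norm_nonneg (T φ)]
    have hs0 : 0 ≤ Real.sqrt (1 - ‖T φ‖ ^ 2) := Real.sqrt_nonneg _
    have hsε : Real.sqrt (1 - ‖T φ‖ ^ 2) ^ 2 = 1 - ‖T φ‖ ^ 2 := Real.sq_sqrt hε0
    refine ContinuousLinearMap.opNorm_le_bound _ (by positivity) ?_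
    intro x
    set cx : ℂ := ⟪φ, x⟫ with hcx
    set u : H := x - cx • φ with hu
    have hφφ : (⟪φ, φ⟫ : ℂ) = 1 := by
      rw [inner_self_eq_norm_sq_to_K, hφ]; norm_num
    have hozero : (⟪φ, u⟫ : ℂ) = 0 := by
      rw [hu, inner_sub_right, inner_smul_right, hφφ, mul_one, hcx, sub_self]
    have hxd : x = cx • φ + u := by rw [hu]; abel
    have hcross : Complex.re ⟪cx • φ, u⟫ = 0 := by
      rw [inner_smul_left, hozero, mul_zero]; simp
    have hpyth : ‖x‖ ^ 2 = ‖cx • φ‖ ^ 2 + ‖u‖ ^ 2 := by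
      conv_lhs => rw [hxd]
      rw [norm_add_sq (𝕜 := ℂ)]
      simp only [RCLike.re_to_complex]
      rw [hcross]
      ring
    have hule : ‖u‖ ≤ ‖x‖ := by
      nlinarith [norm_nonneg x, norm_nonneg u, sq_nonneg ‖cx • φ‖]
    have hcle : ‖cx‖ ≤ ‖x‖ := by
      calc ‖cx‖ ≤ ‖φ‖ * ‖x‖ := norm_inner_le_norm φ x
      _ = ‖x‖ := by rw [hφ, one_mul]
    have happ : (W₀ - rankOne φ) x = cx • (W₀ φ - φ) + W₀ u := by
      rw [ContinuousLinearMap.sub_apply]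
      conv_lhs => rw [hxd]
      rw [map_add, _root_.map_smul]
      have hr : rankOne φ (cx • φ + u) = cx • φ := by
        simp [rankOne, inner_add_right, inner_smul_right, hφφ, hozero, hφ]
      rw [hr, smul_sub]
      abel
    have hWφ : ‖W₀ φ - φ‖ ≤ 2 * Real.sqrt (1 - ‖T φ‖ ^ 2) := by
      have h1 : ‖W₀ φ‖ ≤ 1 := by simpa [hφ] using hW1 φ
      have h2 : Complex.re ⟪W₀ φ, φ⟫ = ‖T φ‖ ^ 2 := by
        have h3 : (⟪W₀ φ, φ⟫ : ℂ) = ⟪φ, W₀ φ⟫ := hWsym φ φ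
        rw [h3, ← hTx φ]
      have hsq : ‖W₀ φ - φ‖ ^ 2 ≤ 2 * (1 - ‖T φ‖ ^ 2) := by
        rw [norm_sub_sq (𝕜 := ℂ)]
        simp only [RCLike.re_to_complex]
        rw [h2, hφ]
        nlinarith [norm_nonneg (W₀ φ)]
      nlinarith [norm_nonneg (W₀ φ - φ), hs0, hsε]
    have hWu : ‖W₀ u‖ ≤ Real.sqrt (1 - ‖T φ‖ ^ 2) * ‖u‖ := by
      have h1 : ‖W₀ u‖ ≤ ‖T u‖ := by
        rw [← hTT, ContinuousLinearMap.mul_apply]; exact ht1 (T u)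
      have h2 : ‖T u‖ ^ 2 ≤ (1 - ‖T φ‖ ^ 2) * ‖u‖ ^ 2 := horto φ u hφ hozero
      nlinarith [norm_nonneg (T u), norm_nonneg u, hs0, hsε,
        mul_nonneg hs0 (norm_nonneg u)]
    calc ‖(W₀ - rankOne φ) x‖ = ‖cx • (W₀ φ - φ) + W₀ u‖ := by rw [happ]
    _ ≤ ‖cx • (W₀ φ - φ)‖ + ‖W₀ u‖ := norm_add_le _ _
    _ = ‖cx‖ * ‖W₀ φ - φ‖ + ‖W₀ u‖ := by rw [norm_smul]
    _ ≤ 3 * Real.sqrt (1 - ‖T φ‖ ^ 2) * ‖x‖ := by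
        nlinarith [norm_nonneg cx, norm_nonneg u, norm_nonneg (W₀ φ - φ), hs0,
          mul_le_mul_of_nonneg_left hWφ (norm_nonneg cx),
          mul_le_mul_of_nonneg_right hcle (mul_nonneg (by norm_num : (0:ℝ) ≤ 2) hs0),
          mul_le_mul_of_nonneg_left hule hs0]
  choose φs hφs1 hφs2 using hP
  have htrace : ∀ n, traceAlong b (W₀ * P n) = ⟪φs n, W₀ (φs n)⟫ := by
    intro n
    rw [hφs2 n]
    unfold traceAlong
    have hterm : ∀ i, (⟪b i, (W₀ * rankOne (φs n)) (b i)⟫ : ℂ)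
        = ⟪φs n, b i⟫ * ⟪b i, W₀ (φs n)⟫ := by
      intro i
      rw [ContinuousLinearMap.mul_apply]
      simp [rankOne, _root_.map_smul, inner_smul_right]
    rw [tsum_congr hterm]
    exact (b.hasSum_inner_mul_inner (φs n) (W₀ (φs n))).tsum_eq
  have hre : Tendsto (fun n => Complex.re ⟪φs n, W₀ (φs n)⟫) atTop (𝓝 1) := by
    have h1 : Tendsto (fun n => (⟪φs n, W₀ (φs n)⟫ : ℂ)) atTop (𝓝 1) :=
      hlim.congr htrace
    have h2 := (Complex.continuous_re.tendsto 1).comp h1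
    simpa [Function.comp_def] using h2
  have hε : Tendsto (fun n => 1 - ‖T (φs n)‖ ^ 2) atTop (𝓝 0) := by
    have h1 : Tendsto (fun n => 1 - Complex.re ⟪φs n, W₀ (φs n)⟫) atTop (𝓝 (1 - 1)) :=
      tendsto_const_nhds.sub hre
    simp only [sub_self] at h1
    exact h1.congr fun n => by rw [hTx (φs n)]
  have hbound : ∀ n, ‖P n - W₀‖ ≤ 3 * Real.sqrt (1 - ‖T (φs n)‖ ^ 2) := by
    intro n
    rw [norm_sub_rev, hφs2 n]
    exact hkey (φs n) (hφs1 n)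
  have hsqt : Tendsto (fun n => 3 * Real.sqrt (1 - ‖T (φs n)‖ ^ 2)) atTop (𝓝 0) := by
    have h1 : Tendsto (fun n => Real.sqrt (1 - ‖T (φs n)‖ ^ 2)) atTop (𝓝 0) := by
      have h2 := (Real.continuous_sqrt.tendsto 0).comp hε
      simpa [Function.comp_def] using h2
    have h3 := h1.const_mul (3:ℝ)
    simpa using h3
  have hPnW : Tendsto (fun n => ‖P n - W₀‖) atTop (𝓝 0) :=
    squeeze_zero (fun n => norm_nonneg _) hbound hsqt
  have hPW : Tendsto P atTop (𝓝 W₀) := tendsto_iff_norm_sub_tendsto_zero.mpr hPnW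
  have hidem : W₀ * W₀ = W₀ := by
    have h1 : Tendsto (fun n => P n * P n) atTop (𝓝 (W₀ * W₀)) := hPW.mul hPW
    have h2 : ∀ n, P n * P n = P n := by
      intro n
      rw [hφs2 n]
      ext x
      have hφφ : (⟪φs n, φs n⟫ : ℂ) = 1 := by
        rw [inner_self_eq_norm_sq_to_K, hφs1 n]; norm_num
      simp [rankOne, ContinuousLinearMap.mul_apply, inner_smul_right, hφφ, smul_smul, hφs1 n]
    rw [funext h2] at h1
    exact tendsto_nhds_unique h1 hPW
  have hx : ∃ x : H, W₀ x ≠ 0 := by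
    by_contra hc
    push_neg at hc
    have hW0 : W₀ = 0 := ContinuousLinearMap.ext fun x => by rw [hc x]; rfl
    rw [hW0] at htr
    have htr' : HasSum (fun _ : ι => (0:ℂ)) 1 := by simpa using htr
    exact one_ne_zero (htr'.unique hasSum_zero)
  obtain ⟨x, hWx⟩ := hx
  have hnWx : (0:ℝ) < ‖W₀ x‖ := norm_pos_iff.mpr hWx
  set φ₀ : H := (‖W₀ x‖ : ℂ)⁻¹ • (W₀ x) with hφ₀def
  have hφ₀ : ‖φ₀‖ = 1 := by
    rw [hφ₀def, norm_smul, norm_inv, Complex.norm_real, Real.norm_eq_abs, abs_of_pos hnWx]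
    exact inv_mul_cancel₀ hnWx.ne'
  have hfix : W₀ (W₀ x) = W₀ x := by
    have h := congrArg (fun A : H →L[ℂ] H => A x) hidem
    simpa [ContinuousLinearMap.mul_apply] using h
  have hWφ₀ : W₀ φ₀ = φ₀ := by
    rw [hφ₀def, _root_.map_smul, hfix]
  have hrank : W₀ = rankOne φ₀ := by
    ext y
    have hφφ : (⟪φ₀, φ₀⟫ : ℂ) = 1 := by
      rw [inner_self_eq_norm_sq_to_K, hφ₀]; norm_num
    set z : H := W₀ y - ⟪φ₀, y⟫ • φ₀ with hz
    have hinn : (⟪φ₀, W₀ y⟫ : ℂ) = ⟪φ₀, y⟫ := by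
      have h := hWsym φ₀ y
      simp only [ContinuousLinearMap.coe_coe] at h
      rw [← h, hWφ₀]
    have hz1 : (⟪φ₀, z⟫ : ℂ) = 0 := by
      rw [hz, inner_sub_right, inner_smul_right, hφφ, mul_one, hinn, sub_self]
    have hTφ₀ : ‖T φ₀‖ ^ 2 = 1 := by
      rw [hTx φ₀, hWφ₀, hφφ]
      simp
    have hz2 := horto φ₀ z hφ₀ hz1
    rw [hTφ₀] at hz2
    have hz2' : ‖T z‖ ^ 2 ≤ 0 := by simpa using hz2
    have hTz : T z = 0 := by
      have h0 : ‖T z‖ ≤ 0 := by nlinarith [norm_nonneg (T z), hz2']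
      exact norm_le_zero_iff.mp h0
    have hWz : W₀ z = 0 := by
      rw [← hTT, ContinuousLinearMap.mul_apply, hTz, map_zero]
    have hfy : W₀ (W₀ y) = W₀ y := by
      have h := congrArg (fun A : H →L[ℂ] H => A y) hidem
      simpa [ContinuousLinearMap.mul_apply] using h
    have hz3 : W₀ z = z := by
      rw [hz, map_sub, _root_.map_smul, hWφ₀, hfy]
    have hz0 : z = 0 := by rw [← hz3, hWz]
    have hsub : W₀ y - (⟪φ₀, y⟫ : ℂ) • φ₀ = 0 := by rw [← hz]; exact hz0
    have hWy : W₀ y = (⟪φ₀, y⟫ : ℂ) • φ₀ := sub_eq_zero.mp hsub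
    rw [hWy]
    simp [rankOne]
  exact ⟨W₀, ⟨φ₀, hφ₀, hrank⟩, hPnW, rfl⟩
end

section
/- If W is a density operator, {φ_n} a sequence of unit vectors converging weakly to ψ, then tr(W P_{φ_n}) → tr(W |ψ⟩⟨ψ|). -/
set_option maxHeartbeats 1000000

open MeasureTheory Topology Filter

section aux

variable {H ι : Type*} [NormedAddCommGroup H] [InnerProductSpace ℂ H] [CompleteSpace H]

omit [CompleteSpace H] in
lemma traceAlong_mul_rankOne (b : HilbertBasis ι ℂ H) (W : H →L[ℂ] H) (φ : H) :
    traceAlong b (W * rankOne φ) = inner ℂ φ (W φ) := by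
  rw [← (b.hasSum_inner_mul_inner φ (W φ)).tsum_eq]
  unfold traceAlong rankOne
  congr 1
  funext i
  simp [ContinuousLinearMap.mul_apply, inner_smul_right]

lemma posCS {W : H →L[ℂ] H} (hW : W.IsPositive) (x y : H) :
    ‖(inner ℂ x (W y) : ℂ)‖ * ‖(inner ℂ y (W x) : ℂ)‖ ≤
      RCLike.re (inner ℂ x (W x) : ℂ) * RCLike.re (inner ℂ y (W y) : ℂ) := by
  have hsym : ∀ a c : H, (inner ℂ (W a) c : ℂ) = inner ℂ a (W c) := fun a c =>
    hW.isSymmetric a c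
  letI c : PreInnerProductSpace.Core ℂ H :=
  { inner := fun a c => inner ℂ a (W c)
    conj_inner_symm := fun a c => by
      show (starRingEnd ℂ) (inner ℂ c (W a) : ℂ) = (inner ℂ a (W c) : ℂ)
      rw [inner_conj_symm, hsym]
    re_inner_nonneg := fun a => hW.re_inner_nonneg_right a
    add_left := fun a c d => inner_add_left _ _ _
    smul_left := fun a c r => inner_smul_left _ _ _ }
  exact InnerProductSpace.Core.inner_mul_inner_self_le (𝕜 := ℂ) (F := H) x y

lemma quad_tendsto_zero (b : HilbertBasis ι ℂ H) (W : H →L[ℂ] H) (hW : IsDensityOp b W)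
    (u : ℕ → H) (M : ℝ) (hM0 : 0 ≤ M) (hM : ∀ n, ‖u n‖ ≤ M)
    (hu : ∀ χ : H, Tendsto (fun n => (inner ℂ χ (u n) : ℂ)) atTop (nhds 0)) :
    Tendsto (fun n => (inner ℂ (u n) (W (u n)) : ℂ)) atTop (nhds 0) := by
  classical
  have hsym : ∀ a c : H, (inner ℂ (W a) c : ℂ) = inner ℂ a (W c) := fun a c => hW.1.isSymmetric a c
  set r : ι → ℝ := fun i => RCLike.re (inner ℂ (b i) (W (b i)) : ℂ) with hr
  have hrnn : ∀ i, 0 ≤ r i := fun i => hW.1.re_inner_nonneg_right (b i)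
  have hrsum : Summable r := by
    have := hW.2.mapL (RCLike.reCLM (K := ℂ))
    exact this.summable
  set C : ℝ := ‖W‖ * M ^ 2 + 1 with hC
  have hC0 : 0 < C := by positivity
  -- uniform bound on the quadratic form
  have hqb : ∀ n, RCLike.re (inner ℂ (u n) (W (u n)) : ℂ) ≤ C := by
    intro n
    have h4 : ‖W (u n)‖ ≤ ‖W‖ * M := le_trans (W.le_opNorm _)
      (mul_le_mul_of_nonneg_left (hM n) (norm_nonneg W))
    calc RCLike.re (inner ℂ (u n) (W (u n)) : ℂ)
        ≤ ‖(inner ℂ (u n) (W (u n)) : ℂ)‖ := RCLike.re_le_norm _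
      _ ≤ ‖u n‖ * ‖W (u n)‖ := norm_inner_le_norm _ _
      _ ≤ M * (‖W‖ * M) := mul_le_mul (hM n) h4 (norm_nonneg _) hM0
      _ ≤ C := by rw [hC]; nlinarith
  -- pointwise bound on coefficients
  have hcoef : ∀ (n : ℕ) (i : ι), ‖(inner ℂ (b i) (W (u n)) : ℂ)‖ ^ 2 ≤ r i * C := by
    intro n i
    have h := posCS hW.1 (b i) (u n)
    have heq : ‖(inner ℂ (u n) (W (b i)) : ℂ)‖ = ‖(inner ℂ (b i) (W (u n)) : ℂ)‖ := by
      rw [← hsym (u n) (b i)]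
      exact norm_inner_symm _ _
    rw [heq] at h
    have h2 : r i * RCLike.re (inner ℂ (u n) (W (u n)) : ℂ) ≤ r i * C :=
      mul_le_mul_of_nonneg_left (hqb n) (hrnn i)
    calc ‖(inner ℂ (b i) (W (u n)) : ℂ)‖ ^ 2
        = ‖(inner ℂ (b i) (W (u n)) : ℂ)‖ * ‖(inner ℂ (b i) (W (u n)) : ℂ)‖ := by ring
      _ ≤ r i * RCLike.re (inner ℂ (u n) (W (u n)) : ℂ) := h
      _ ≤ r i * C := h2
  rw [Metric.tendsto_atTop]
  intro ε hε
  set δ : ℝ := (ε / 2) ^ 2 / (M ^ 2 * C + 1) with hδdef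
  have hδ : 0 < δ := by positivity
  -- choose the finite set F
  obtain ⟨F, hF⟩ := summable_iff_vanishing.mp hrsum (Metric.ball 0 δ) (Metric.ball_mem_nhds 0 hδ)
  -- tail sums of r are ≤ δ
  have hrtail : ∀ t : Finset {i : ι // i ∉ F}, ∑ i ∈ t, r i.1 ≤ δ := by
    intro t
    have hdisj : Disjoint (t.image Subtype.val) F := by
      rw [Finset.disjoint_left]
      rintro a ha
      obtain ⟨⟨i, hi⟩, -, rfl⟩ := Finset.mem_image.mp ha
      exact hi
    have := hF _ hdisj
    rw [Metric.mem_ball, Real.dist_eq, sub_zero] at this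
    have hsum_eq : ∑ a ∈ t.image Subtype.val, r a = ∑ i ∈ t, r i.1 :=
      Finset.sum_image (by rintro ⟨i, hi⟩ - ⟨j, hj⟩ - h; simpa using congrArg Subtype.val (Subtype.ext h))
    rw [hsum_eq] at this
    exact le_of_lt (lt_of_le_of_lt (le_abs_self _) this)
  -- summability of norms of the terms
  have hnormsum : ∀ n, Summable (fun i => ‖(inner ℂ (u n) (b i) : ℂ) * (inner ℂ (b i) (W (u n)) : ℂ)‖) := by
    intro n
    refine Summable.of_nonneg_of_le (fun i => norm_nonneg _) (fun i => ?_)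
      (((b.orthonormal.inner_products_summable (u n)).add
        (b.orthonormal.inner_products_summable (W (u n)))).div_const 2)
    rw [norm_mul]
    have := sq_nonneg (‖(inner ℂ (b i) (u n) : ℂ)‖ - ‖(inner ℂ (b i) (W (u n)) : ℂ)‖)
    have hns : ‖(inner ℂ (u n) (b i) : ℂ)‖ = ‖(inner ℂ (b i) (u n) : ℂ)‖ := norm_inner_symm _ _
    rw [hns]; nlinarith
  -- tail bound, uniform in n
  have htail : ∀ n, ‖∑' i : {i : ι // i ∉ F}, (inner ℂ (u n) (b i.1) : ℂ) * (inner ℂ (b i.1) (W (u n)) : ℂ)‖ ≤ ε / 2 := by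
    intro n
    have hsub : Summable (fun i : {i : ι // i ∉ F} => ‖(inner ℂ (u n) (b i.1) : ℂ) * (inner ℂ (b i.1) (W (u n)) : ℂ)‖) :=
      (hnormsum n).subtype _
    refine le_trans (norm_tsum_le_tsum_norm hsub) ?_
    refine hsub.tsum_le_of_sum_le ?_
    intro t
    -- finite Cauchy-Schwarz
    have key : (∑ i ∈ t, ‖(inner ℂ (u n) (b i.1) : ℂ) * (inner ℂ (b i.1) (W (u n)) : ℂ)‖) ^ 2
        ≤ M ^ 2 * (C * δ) := by
      have hCS := Finset.sum_mul_sq_le_sq_mul_sq t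
        (fun i => ‖(inner ℂ (b i.1) (u n) : ℂ)‖) (fun i => ‖(inner ℂ (b i.1) (W (u n)) : ℂ)‖)
      have heqterm : ∀ i ∈ t, ‖(inner ℂ (u n) (b i.1) : ℂ) * (inner ℂ (b i.1) (W (u n)) : ℂ)‖
          = ‖(inner ℂ (b i.1) (u n) : ℂ)‖ * ‖(inner ℂ (b i.1) (W (u n)) : ℂ)‖ := by
        intro i _
        rw [norm_mul, norm_inner_symm (u n)]
      rw [Finset.sum_congr rfl heqterm]
      have hb1 : ∑ i ∈ t, ‖(inner ℂ (b i.1) (u n) : ℂ)‖ ^ 2 ≤ M ^ 2 := by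
        have horto : Orthonormal ℂ (fun i : {i : ι // i ∉ F} => b i.1) :=
          b.orthonormal.comp _ Subtype.val_injective
        refine le_trans (horto.sum_inner_products_le (u n)) ?_
        have := hM n
        nlinarith [norm_nonneg (u n)]
      have hb2 : ∑ i ∈ t, ‖(inner ℂ (b i.1) (W (u n)) : ℂ)‖ ^ 2 ≤ C * δ := by
        calc ∑ i ∈ t, ‖(inner ℂ (b i.1) (W (u n)) : ℂ)‖ ^ 2
            ≤ ∑ i ∈ t, r i.1 * C := Finset.sum_le_sum (fun i _ => hcoef n i.1)
          _ = (∑ i ∈ t, r i.1) * C := by rw [Finset.sum_mul]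
          _ ≤ δ * C := mul_le_mul_of_nonneg_right (hrtail t) (le_of_lt hC0)
          _ = C * δ := mul_comm _ _
      calc (∑ i ∈ t, ‖(inner ℂ (b i.1) (u n) : ℂ)‖ * ‖(inner ℂ (b i.1) (W (u n)) : ℂ)‖) ^ 2
          ≤ (∑ i ∈ t, ‖(inner ℂ (b i.1) (u n) : ℂ)‖ ^ 2) * ∑ i ∈ t, ‖(inner ℂ (b i.1) (W (u n)) : ℂ)‖ ^ 2 := hCS
        _ ≤ M ^ 2 * (C * δ) := by
            apply mul_le_mul hb1 hb2 (Finset.sum_nonneg (fun i _ => sq_nonneg _)) (by positivity)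
    have hδbound : M ^ 2 * (C * δ) ≤ (ε / 2) ^ 2 := by
      rw [hδdef]
      rw [div_eq_mul_inv, ← mul_assoc]
      have h1 : M ^ 2 * C ≤ M ^ 2 * C + 1 := by linarith
      have h2 : 0 < M ^ 2 * C + 1 := by positivity
      calc M ^ 2 * C * ((ε / 2) ^ 2 * (M ^ 2 * C + 1)⁻¹)
          = (ε / 2) ^ 2 * ((M ^ 2 * C) * (M ^ 2 * C + 1)⁻¹) := by ring
        _ ≤ (ε / 2) ^ 2 * 1 := by
            apply mul_le_mul_of_nonneg_left _ (sq_nonneg _)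
            rw [mul_inv_le_iff₀ h2, one_mul]; exact h1
        _ = (ε / 2) ^ 2 := mul_one _
    have hnn : 0 ≤ ∑ i ∈ t, ‖(inner ℂ (u n) (b i.1) : ℂ) * (inner ℂ (b i.1) (W (u n)) : ℂ)‖ :=
      Finset.sum_nonneg (fun i _ => norm_nonneg _)
    nlinarith [le_trans key hδbound, hε]
  -- the finite part tends to 0
  have hfin : Tendsto (fun n => ∑ i ∈ F, (inner ℂ (u n) (b i) : ℂ) * (inner ℂ (b i) (W (u n)) : ℂ))
      atTop (nhds 0) := by
    have : ∀ i : ι, Tendsto (fun n => (inner ℂ (u n) (b i) : ℂ) * (inner ℂ (b i) (W (u n)) : ℂ))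
        atTop (nhds 0) := by
      intro i
      have h1 : Tendsto (fun n => (inner ℂ (u n) (b i) : ℂ)) atTop (nhds 0) := by
        have h := (hu (b i)).star
        rw [star_zero] at h
        simpa only [RCLike.star_def, inner_conj_symm] using h
      have h2 : Tendsto (fun n => (inner ℂ (b i) (W (u n)) : ℂ)) atTop (nhds 0) := by
        have := hu (W (b i))
        simpa [hsym] using this
      simpa using h1.mul h2
    have := tendsto_finset_sum F (fun i _ => this i)
    simpa using this
  rw [Metric.tendsto_atTop] at hfin
  obtain ⟨N, hN⟩ := hfin (ε / 4) (by positivity)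
  refine ⟨N, fun n hn => ?_⟩
  have hsumf : Summable (fun i => (inner ℂ (u n) (b i) : ℂ) * (inner ℂ (b i) (W (u n)) : ℂ)) :=
    b.summable_inner_mul_inner _ _
  have hdecomp : (inner ℂ (u n) (W (u n)) : ℂ)
      = (∑ i ∈ F, (inner ℂ (u n) (b i) : ℂ) * (inner ℂ (b i) (W (u n)) : ℂ))
        + ∑' i : {i : ι // i ∉ F}, (inner ℂ (u n) (b i.1) : ℂ) * (inner ℂ (b i.1) (W (u n)) : ℂ) := by
    rw [← (b.hasSum_inner_mul_inner (u n) (W (u n))).tsum_eq]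
    exact (hsumf.sum_add_tsum_compl).symm
  rw [dist_eq_norm, sub_zero, hdecomp]
  calc ‖_ + _‖ ≤ ‖∑ i ∈ F, (inner ℂ (u n) (b i) : ℂ) * (inner ℂ (b i) (W (u n)) : ℂ)‖
        + ‖∑' i : {i : ι // i ∉ F}, (inner ℂ (u n) (b i.1) : ℂ) * (inner ℂ (b i.1) (W (u n)) : ℂ)‖ := norm_add_le _ _
    _ < ε := by
        have h1 := hN n hn
        rw [dist_eq_norm, sub_zero] at h1
        have h2 := htail n
        linarith

end aux

theorem stmt17 {H ι : Type*} [NormedAddCommGroup H] [InnerProductSpace ℂ H] [CompleteSpace H]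
    [SecondCountableTopology H] (b : HilbertBasis ι ℂ H)
    (W : H →L[ℂ] H) (hW : IsDensityOp b W)
    (φ : ℕ → H) (hφ : ∀ n, ‖φ n‖ = 1) (ψ : H)
    (hweak : ∀ χ : H, Tendsto (fun n => (inner ℂ χ (φ n) : ℂ)) atTop (nhds (inner ℂ χ ψ))) :
    Tendsto (fun n => traceAlong b (W * rankOne (φ n))) atTop
      (nhds (traceAlong b (W * rankOne ψ))) := by
  simp only [traceAlong_mul_rankOne]
  have hsym : ∀ a c : H, (inner ℂ (W a) c : ℂ) = inner ℂ a (W c) := fun a c => hW.1.isSymmetric a c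
  set u : ℕ → H := fun n => φ n - ψ with hu_def
  have hu : ∀ χ : H, Tendsto (fun n => (inner ℂ χ (u n) : ℂ)) atTop (nhds 0) := by
    intro χ
    have := (hweak χ).sub (tendsto_const_nhds (x := (inner ℂ χ ψ : ℂ)))
    rw [sub_self] at this
    simpa [hu_def, inner_sub_right] using this
  have hM : ∀ n, ‖u n‖ ≤ 1 + ‖ψ‖ := by
    intro n
    calc ‖φ n - ψ‖ ≤ ‖φ n‖ + ‖ψ‖ := norm_sub_le _ _
      _ = 1 + ‖ψ‖ := by rw [hφ n]
  have hquad : Tendsto (fun n => (inner ℂ (u n) (W (u n)) : ℂ)) atTop (nhds 0) :=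
    quad_tendsto_zero b W hW u (1 + ‖ψ‖) (by positivity) hM hu
  have h2 : Tendsto (fun n => (inner ℂ (φ n) (W ψ) : ℂ)) atTop (nhds (inner ℂ ψ (W ψ) : ℂ)) := by
    have h := (hweak (W ψ)).star
    simpa only [RCLike.star_def, inner_conj_symm] using h
  have h3 : Tendsto (fun n => (inner ℂ ψ (W (φ n)) : ℂ)) atTop (nhds (inner ℂ ψ (W ψ) : ℂ)) := by
    have h := hweak (W ψ)
    simpa [hsym] using h
  have hexpand : ∀ n, (inner ℂ (φ n) (W (φ n)) : ℂ)
      = inner ℂ (u n) (W (u n)) + inner ℂ (φ n) (W ψ) + inner ℂ ψ (W (φ n)) - inner ℂ ψ (W ψ) := by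
    intro n
    simp only [hu_def, map_sub, inner_sub_left, inner_sub_right]
    ring
  have htot := ((hquad.add h2).add h3).sub
    (tendsto_const_nhds (x := (inner ℂ ψ (W ψ) : ℂ)))
  rw [show (0 : ℂ) + inner ℂ ψ (W ψ) + inner ℂ ψ (W ψ) - inner ℂ ψ (W ψ) = inner ℂ ψ (W ψ) by ring] at htot
  simpa only [← hexpand] using htot
end
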